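/- In P¹(F_{27}) with θ(x) = x + x⁻¹, the functional graph of θ has exactly 3 connected components: the fixed point ∞ (with the single tree vertex 0 attached), the 2-cycle {1, −1}, and one cycle of length 12 consisting of the elements α with ord(ψ(α)) = 13, each cycle vertex of the 12-cycle and ∞ being the root of a binary tree of depth 1. -/

import Mathlib

open OnePoint

variable (F : Type*) [Field F] [DecidableEq F]

/-- The map `θ(x) = x + x⁻¹`, with `θ(0) = θ(∞) = ∞`. -/
def theta : OnePoint F → OnePoint F
  | Option.some x => if x = 0 then ∞ else Option.some (x + x⁻¹)
  | Option.none => ∞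

/-- The inverse-square map `s(x) = x⁻²`, with `s(0) = ∞`, `s(∞) = 0`. -/
def sMap : OnePoint F → OnePoint F
  | Option.some x => if x = 0 then ∞ else Option.some (x⁻¹ ^ 2)
  | Option.none => Option.some 0

/-- The involution `ψ(x) = (x+1)/(x-1)`, with `ψ(1) = ∞`, `ψ(∞) = 1`. -/
def psi : OnePoint F → OnePoint F
  | Option.some x => if x = 1 then ∞ else Option.some ((x + 1) / (x - 1))
  | Option.none => Option.some 1

section AuxLemmas

variable {F}

section Char3
variable [Fintype F] (hF : Fintype.card F = 27)
include hF

lemma char3 : (3 : F) = 0 := by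
  obtain ⟨p, hc⟩ := CharP.exists F
  haveI := hc
  obtain ⟨n, hp, hcard⟩ := FiniteField.card F p
  have hdvd : p ∣ 27 := by rw [← hF, hcard]; exact dvd_pow_self p n.ne_zero
  have h3 : (27 : ℕ) = 3 ^ 3 := by norm_num
  rw [h3] at hdvd
  have hp3 : p = 3 :=
    (Nat.prime_dvd_prime_iff_eq hp Nat.prime_three).mp (hp.dvd_of_dvd_pow hdvd)
  have := CharP.cast_eq_zero F p
  rw [hp3] at this; exact_mod_cast this

lemma htwo : (2 : F) ≠ 0 := by
  have h3 := char3 hF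
  intro h2
  have : (1 : F) = 0 := by linear_combination h3 - h2
  exact one_ne_zero this

lemma neg_one_ne_one' : (-1 : F) ≠ 1 := by
  intro h
  exact htwo hF (by linear_combination -h)

lemma pow26 {b : F} (hb : b ≠ 0) : b ^ 26 = 1 := by
  have := FiniteField.pow_card_sub_one_eq_one b hb
  rwa [hF] at this

lemma psi_psi (x : OnePoint F) : psi F (psi F x) = x := by
  have h2 : (2 : F) ≠ 0 := htwo hF
  match x with
  | Option.none =>
    have h1 : psi F (Option.none) = Option.some 1 := rfl
    rw [h1]
    show (if (1:F) = 1 then (Option.none : OnePoint F) else _) = Option.none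
    rw [if_pos rfl]
  | Option.some x =>
    by_cases hx1 : x = 1
    · subst hx1
      show psi F (if (1:F) = 1 then (∞ : OnePoint F) else _) = _
      erw [if_pos rfl]
      show Option.some (1:F) = Option.some 1
      rfl
    · have hxm : x - 1 ≠ 0 := sub_ne_zero.mpr hx1
      have hne : (x + 1) / (x - 1) ≠ 1 := by
        intro h
        rw [div_eq_one_iff_eq hxm] at h
        exact h2 (by linear_combination h)
      show psi F (if x = 1 then _ else Option.some ((x+1)/(x-1))) = _
      erw [if_neg hx1]
      show (if (x+1)/(x-1) = 1 then _ else Option.some (((x+1)/(x-1) + 1)/((x+1)/(x-1) - 1))) = _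
      erw [if_neg hne]
      congr 1
      have hden : (x+1)/(x-1) - 1 ≠ 0 := sub_ne_zero.mpr hne
      rw [div_eq_iff hden]
      field_simp
      ring

lemma psi_inj : Function.Injective (psi F) := by
  intro a b h
  have := psi_psi hF (F := F)
  calc a = psi F (psi F a) := (this a).symm
    _ = psi F (psi F b) := by rw [h]
    _ = b := this b

lemma conj (x : OnePoint F) : psi F (theta F x) = sMap F (psi F x) := by
  have h3 := char3 hF
  have h2 : (2 : F) ≠ 0 := htwo hF
  match x with
  | Option.none =>
    show psi F ∞ = sMap F (Option.some 1)
    show Option.some (1:F) = if (1:F) = 0 then _ else Option.some ((1:F)⁻¹ ^ 2)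
    erw [if_neg (one_ne_zero)]
    norm_num
  | Option.some x =>
    by_cases hx0 : x = 0
    · subst hx0
      show psi F (if (0:F) = 0 then ∞ else _) = sMap F (if (0:F) = 1 then _ else Option.some (((0:F)+1)/((0:F)-1)))
      erw [if_pos rfl, if_neg (zero_ne_one)]
      show Option.some (1:F) = sMap F (Option.some (((0:F)+1)/((0:F)-1)))
      have : ((0:F)+1)/((0:F)-1) = -1 := by norm_num
      rw [this]
      show _ = if (-1:F) = 0 then _ else Option.some ((-1:F)⁻¹^2)
      erw [if_neg (by norm_num)]
      norm_num
    · show psi F (if x = 0 then ∞ else Option.some (x + x⁻¹)) = sMap F (psi F (Option.some x))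
      erw [if_neg hx0]
      by_cases hx1 : x = 1
      · subst hx1
        show psi F (Option.some ((1:F) + 1⁻¹)) = sMap F (if (1:F) = 1 then ∞ else _)
        erw [if_pos rfl]
        have he : (1:F) + 1⁻¹ = -1 := by
          rw [inv_one]; linear_combination h3
        rw [he]
        show (if (-1:F) = 1 then _ else Option.some (((-1:F)+1)/((-1:F)-1))) = Option.some 0
        erw [if_neg (neg_one_ne_one' hF)]
        congr 1
        norm_num
      · show _ = sMap F (if x = 1 then ∞ else Option.some ((x+1)/(x-1)))
        erw [if_neg hx1]
        have hxm : x - 1 ≠ 0 := sub_ne_zero.mpr hx1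
        by_cases hxn : x = -1
        · subst hxn
          have he : (-1:F) + (-1:F)⁻¹ = 1 := by
            rw [inv_neg, inv_one]; linear_combination -h3
          rw [he]
          show (if (1:F) = 1 then (∞ : OnePoint F) else _) = _
          erw [if_pos rfl]
          have hz : ((-1:F)+1)/((-1:F)-1) = 0 := by norm_num
          rw [hz]
          show _ = if (0:F) = 0 then (∞ : OnePoint F) else _
          erw [if_pos rfl]
        · have hxp : x + 1 ≠ 0 := fun h => hxn (by linear_combination h)
          have hne1 : x + x⁻¹ ≠ 1 := by
            intro h
            have hx2 : x ^ 2 + 1 = x := by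
              have := congrArg (· * x) h
              try simp only at this
              rw [add_mul, inv_mul_cancel₀ hx0, one_mul] at this
              linear_combination this
            have hsq : (x + 1) ^ 2 = 0 := by linear_combination hx2 - x + x * h3
            exact hxp ((pow_eq_zero_iff (two_ne_zero)).mp hsq)
          show (if x + x⁻¹ = 1 then _ else Option.some ((x+x⁻¹+1)/(x+x⁻¹-1))) = _
          erw [if_neg hne1]
          have hq0 : (x+1)/(x-1) ≠ 0 := div_ne_zero hxp hxm
          show _ = if (x+1)/(x-1) = 0 then _ else Option.some (((x+1)/(x-1))⁻¹^2)
          erw [if_neg hq0]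
          congr 1
          have hden1 : x + x⁻¹ - 1 ≠ 0 := sub_ne_zero.mpr hne1
          rw [inv_div, div_pow, div_eq_div_iff hden1 (pow_ne_zero 2 hxp)]
          field_simp
          ring_nf
          linear_combination (2*x^3 + 2*x) * h3
        
lemma theta_eq (x : OnePoint F) : theta F x = psi F (sMap F (psi F x)) := by
  rw [← conj hF, psi_psi hF]

lemma theta_iter (k : ℕ) (x : OnePoint F) :
    (theta F)^[k] x = psi F ((sMap F)^[k] (psi F x)) := by
  induction k with
  | zero => simp [psi_psi hF]
  | succ n ih =>
    rw [Function.iterate_succ_apply', ih, theta_eq hF, psi_psi hF,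
      Function.iterate_succ_apply' (sMap F) n (psi F x)]

lemma theta_periodic_iff (k : ℕ) (x : OnePoint F) :
    (theta F)^[k] x = x ↔ (sMap F)^[k] (psi F x) = psi F x := by
  rw [theta_iter hF]
  constructor
  · intro h
    have := congrArg (psi F) h
    rwa [psi_psi hF] at this
  · intro h; rw [h, psi_psi hF]

lemma sMap_some {b : F} (hb : b ≠ 0) : sMap F (Option.some b) = Option.some (b⁻¹ ^ 2) := by
  show (if b = 0 then _ else _) = _
  erw [if_neg hb]

lemma sIter {b : F} (hb : b ≠ 0) (hb26 : b ^ 26 = 1) (k : ℕ) :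
    (sMap F)^[k] (Option.some b) = Option.some (b ^ (24 ^ k)) := by
  induction k with
  | zero => simp; rfl
  | succ n ih =>
    erw [Function.iterate_succ_apply', ih,
      sMap_some hF (pow_ne_zero _ hb)]
    congr 1
    have h1 : (b ^ 24 ^ n)⁻¹ ^ 2 * (b ^ 24 ^ n) ^ 2 = 1 := by
      rw [← mul_pow, inv_mul_cancel₀ (pow_ne_zero _ hb), one_pow]
    have h2 : b ^ 24 ^ (n + 1) * (b ^ 24 ^ n) ^ 2 = 1 := by
      rw [← pow_mul, ← pow_add]
      have : 24 ^ (n+1) + 24 ^ n * 2 = 26 * 24 ^ n := by ring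
      rw [this, pow_mul, hb26, one_pow]
    exact mul_right_cancel₀ (pow_ne_zero 2 (pow_ne_zero _ hb)) (h1.trans h2.symm)

-- any positive period forces b^13 = 1
lemma period_imp_13 {b : F} (hb : b ≠ 0) (hb26 : b ^ 26 = 1) {k : ℕ} (hk : 0 < k)
    (h : (sMap F)^[k] (Option.some b) = Option.some b) : b ^ 13 = 1 := by
  rw [sIter hF hb hb26] at h
  have hexp : b ^ (24 ^ k - 1) = 1 := by
    have h1 : (1 : ℕ) ≤ 24 ^ k := Nat.one_le_pow _ _ (by norm_num)
    have : b ^ (24 ^ k - 1) * b = b := by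
      rw [← pow_succ]
      have : 24 ^ k - 1 + 1 = 24 ^ k := by omega
      rw [this]
      exact Option.some_injective F h
    have := mul_right_cancel₀ hb (this.trans (one_mul b).symm)
    exact this
  have hd1 : orderOf b ∣ 24 ^ k - 1 := orderOf_dvd_of_pow_eq_one hexp
  have hd2 : orderOf b ∣ 26 := orderOf_dvd_of_pow_eq_one hb26
  have hodd : ¬ 2 ∣ (24 ^ k - 1) := by
    have h2 : 2 ∣ 24 ^ k := dvd_pow (by norm_num) hk.ne'
    have h1 : (1 : ℕ) ≤ 24 ^ k := Nat.one_le_pow _ _ (by norm_num)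
    omega
  have hcop : (orderOf b).Coprime 2 := by
    rw [Nat.coprime_comm]
    rw [Nat.Prime.coprime_iff_not_dvd Nat.prime_two]
    intro h2d
    exact hodd (h2d.trans hd1)
  have h13 : orderOf b ∣ 13 := hcop.dvd_of_dvd_mul_right (by rw [show (13*2 : ℕ) = 26 from rfl]; exact hd2)
  exact orderOf_dvd_iff_pow_eq_one.mp h13

lemma sIter12 {b : F} (hb : b ≠ 0) (hb13 : b ^ 13 = 1) :
    (sMap F)^[12] (Option.some b) = Option.some b := by
  have hb26 : b ^ 26 = 1 := by
    rw [show (26:ℕ) = 13*2 from rfl, pow_mul, hb13, one_pow]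
  rw [sIter hF hb hb26]
  congr 1
  rw [pow_eq_pow_mod (24 ^ 12) hb13]
  norm_num

omit hF in
lemma psi_some {c : F} (hc : c ≠ 1) :
    psi F (Option.some c) = Option.some ((c + 1) / (c - 1)) := if_neg hc

lemma sMap_zero : sMap F (Option.some (0 : F)) = Option.none := by
  show (if (0:F) = 0 then (∞ : OnePoint F) else _) = _
  erw [if_pos rfl]; rfl

omit hF in
lemma sMap_none : sMap F Option.none = Option.some (0 : F) := rfl

lemma s12s (y : OnePoint F) : (sMap F)^[12] (sMap F y) = sMap F y := by
  have h12 : (12 : ℕ) = 2 * 6 := rfl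
  match y with
  | Option.none =>
    rw [sMap_none]
    have hcyc : (sMap F)^[2] (Option.some (0:F)) = Option.some 0 := by
      show sMap F (sMap F (Option.some (0:F))) = _
      rw [sMap_zero hF, sMap_none]
    rw [h12, Function.iterate_mul]
    exact Function.iterate_fixed hcyc 6
  | Option.some b =>
    by_cases hb : b = 0
    · subst hb
      rw [sMap_zero hF]
      have hcyc : (sMap F)^[2] (Option.none : OnePoint F) = Option.none := by
        show sMap F (sMap F (Option.none : OnePoint F)) = _
        rw [sMap_none, sMap_zero hF]
      rw [h12, Function.iterate_mul]
      exact Function.iterate_fixed hcyc 6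
    · rw [sMap_some hF hb]
      have hc0 : b⁻¹ ^ 2 ≠ 0 := pow_ne_zero _ (inv_ne_zero hb)
      have hc13 : (b⁻¹ ^ 2) ^ 13 = 1 := by
        rw [← pow_mul, show (2 * 13 : ℕ) = 26 from rfl, inv_pow, pow26 hF hb, inv_one]
      exact sIter12 hF hc0 hc13

lemma theta12 (x : OnePoint F) : (theta F)^[12] (theta F x) = theta F x := by
  rw [theta_iter hF, conj hF, s12s hF, ← conj hF, psi_psi hF]

end Char3

lemma range_shift {X : Type*} (f : X → X) (i j : ℕ) (α : X) (h : f^[j] (f^[i] α) = α) :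
    Set.range (fun n : ℕ => f^[n] (f^[i] α)) = Set.range (fun n : ℕ => f^[n] α) := by
  ext z
  simp only [Set.mem_range]
  constructor
  · rintro ⟨n, rfl⟩
    exact ⟨n + i, Function.iterate_add_apply f n i α⟩
  · rintro ⟨n, rfl⟩
    refine ⟨n + j, ?_⟩
    rw [Function.iterate_add_apply, h]

lemma exists_j : ∀ m, m < 13 → m ≠ 0 → ∃ j, j < 12 ∧ 11 ^ j % 13 = m := by decide

lemma zmod_pow_iff (k : ℕ) : (11 : ZMod 13) ^ k = 1 ↔ 12 ∣ k := by
  have h12 : ((11 : ZMod 13)) ^ (12 : ℕ) = 1 := by decide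
  constructor
  · intro h
    rw [pow_eq_pow_mod k h12] at h
    have hlt : k % 12 < 12 := Nat.mod_lt _ (by norm_num)
    have key : ∀ r, r < 12 → (11 : ZMod 13) ^ r = 1 → r = 0 := by decide
    exact Nat.dvd_of_mod_eq_zero (key _ hlt h)
  · rintro ⟨m, rfl⟩
    rw [pow_mul, h12, one_pow]

lemma dvd13_iff (k : ℕ) : 13 ∣ 24 ^ k - 1 ↔ 12 ∣ k := by
  have h1 : (1 : ℕ) ≤ 24 ^ k := Nat.one_le_pow _ _ (by norm_num)
  rw [← zmod_pow_iff]
  have hcast : ((24 ^ k - 1 : ℕ) : ZMod 13) = (11 : ZMod 13) ^ k - 1 := by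
    rw [Nat.cast_sub h1]
    push_cast
    norm_num
    exact congrArg (· ^ k) (by decide)
  constructor
  · intro h
    have h0 : ((24 ^ k - 1 : ℕ) : ZMod 13) = 0 := (ZMod.natCast_eq_zero_iff _ _).mpr h
    rw [hcast] at h0
    linear_combination h0
  · intro h
    apply (ZMod.natCast_eq_zero_iff _ _).mp
    rw [hcast, h, sub_self]

section Char3
variable [Fintype F] (hF : Fintype.card F = 27)
include hF

lemma period_iff13 {b : F} (hb0 : b ≠ 0) (hb : orderOf b = 13) (k : ℕ) :
    (sMap F)^[k] (Option.some b) = Option.some b ↔ 12 ∣ k := by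
  have hb26 : b ^ 26 = 1 := pow26 hF hb0
  rw [sIter hF hb0 hb26]
  have h1 : (1 : ℕ) ≤ 24 ^ k := Nat.one_le_pow _ _ (by norm_num)
  constructor
  · intro h
    have heq : b ^ 24 ^ k = b := Option.some_injective F h
    have hexp : b ^ (24 ^ k - 1) = 1 := by
      have h2 : b ^ (24 ^ k - 1) * b = b := by
        rw [← pow_succ, show 24 ^ k - 1 + 1 = 24 ^ k by omega]; exact heq
      exact mul_right_cancel₀ hb0 (h2.trans (one_mul b).symm)
    have := orderOf_dvd_of_pow_eq_one hexp
    rw [hb] at this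
    exact (dvd13_iff k).mp this
  · intro hk
    have : (13 : ℕ) ∣ 24 ^ k - 1 := (dvd13_iff k).mpr hk
    have hexp : b ^ (24 ^ k - 1) = 1 := orderOf_dvd_iff_pow_eq_one.mp (hb ▸ this)
    congr 1
    calc b ^ 24 ^ k = b ^ (24 ^ k - 1) * b := by
          rw [← pow_succ, show 24 ^ k - 1 + 1 = 24 ^ k by omega]
      _ = b := by rw [hexp, one_mul]

omit hF in
lemma ne_zero_of_orderOf13 {b : F} (hb : orderOf b = 13) : b ≠ 0 := by
  have h13 : b ^ 13 = 1 := hb ▸ pow_orderOf_eq_one b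
  intro h0
  rw [h0] at h13
  simp at h13

omit hF in
lemma count13 (hF : Fintype.card F = 27) : {b : F | orderOf b = 13}.ncard = 12 := by
  classical
  have hcardu : Fintype.card Fˣ = 26 := by rw [Fintype.card_units, hF]
  have himg : {b : F | orderOf b = 13} = Units.val '' {u : Fˣ | orderOf u = 13} := by
    ext b
    constructor
    · intro hb
      have hb0 : b ≠ 0 := ne_zero_of_orderOf13 hb
      refine ⟨Units.mk0 b hb0, ?_, rfl⟩
      show orderOf (Units.mk0 b hb0) = 13
      rw [← orderOf_units, Units.val_mk0]
      exact hb
    · rintro ⟨u, hu, rfl⟩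
      show orderOf ((u : Fˣ) : F) = 13
      rw [orderOf_units]
      exact hu
  rw [himg, Set.ncard_image_of_injective _ Units.val_injective]
  have hset : {u : Fˣ | orderOf u = 13} = ↑(Finset.univ.filter fun u : Fˣ => orderOf u = 13) := by
    ext u; simp
  rw [hset, Set.ncard_coe_finset]
  have hdvd : (13 : ℕ) ∣ Fintype.card Fˣ := by rw [hcardu]; norm_num
  have := IsCyclic.card_orderOf_eq_totient (α := Fˣ) hdvd
  rw [this, Nat.totient_prime (by norm_num)]

lemma minPeriod12 {α : OnePoint F} {b : F} (hpsi : psi F α = Option.some b)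
    (hb : orderOf b = 13) : Function.minimalPeriod (theta F) α = 12 := by
  have hb0 : b ≠ 0 := ne_zero_of_orderOf13 hb
  have hchar : ∀ k : ℕ, (theta F)^[k] α = α ↔ 12 ∣ k := by
    intro k
    rw [theta_periodic_iff hF, hpsi, period_iff13 hF hb0 hb]
  have h12 : Function.IsPeriodicPt (theta F) 12 α := by
    show (theta F)^[12] α = α
    exact (hchar 12).mpr dvd_rfl
  have hdvd : Function.minimalPeriod (theta F) α ∣ 12 := h12.minimalPeriod_dvd
  have hmem : (theta F)^[Function.minimalPeriod (theta F) α] α = α :=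
    Function.iterate_minimalPeriod
  have h12dvd : 12 ∣ Function.minimalPeriod (theta F) α := (hchar _).mp hmem
  exact Nat.dvd_antisymm hdvd h12dvd

omit hF in
lemma exists_b0 (hF : Fintype.card F = 27) : ∃ b0 : F, orderOf b0 = 13 ∧
    ∀ b : F, b ≠ 0 → b ^ 13 = 1 → ∃ m : ℕ, b = b0 ^ m := by
  classical
  have hcardu : Fintype.card Fˣ = 26 := by rw [Fintype.card_units, hF]
  obtain ⟨g, hg⟩ := IsCyclic.exists_generator (α := Fˣ)
  have horder : orderOf g = 26 := by
    rw [orderOf_eq_card_of_forall_mem_zpowers hg, Nat.card_eq_fintype_card, hcardu]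
  refine ⟨((g ^ 2 : Fˣ) : F), ?_, ?_⟩
  · rw [orderOf_units, orderOf_pow, horder]
    decide
  · intro b hb0 hb13
    set u := Units.mk0 b hb0 with hu
    have hu13 : u ^ 13 = 1 := by
      ext
      push_cast
      exact hb13
    obtain ⟨n, hn⟩ : ∃ n : ℕ, g ^ n = u := by
      have := (mem_powers_iff_mem_zpowers (x := g) (y := u)).mpr (hg u)
      exact this
    have h26 : (26 : ℕ) ∣ 13 * n := by
      rw [← horder]
      apply orderOf_dvd_of_pow_eq_one
      rw [mul_comm, pow_mul, hn, hu13]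
    have h2n : 2 ∣ n := by
      have : (13 * 2 : ℕ) ∣ 13 * n := by norm_num at h26 ⊢; omega
      exact (Nat.mul_dvd_mul_iff_left (by norm_num : 0 < 13)).mp this
    obtain ⟨m, rfl⟩ := h2n
    refine ⟨m, ?_⟩
    have : (g ^ 2) ^ m = u := by rw [← pow_mul]; exact hn
    calc b = ((u : Fˣ) : F) := rfl
      _ = (((g ^ 2) ^ m : Fˣ) : F) := by rw [this]
      _ = ((g ^ 2 : Fˣ) : F) ^ m := by push_cast; ring

lemma theta_one : theta F ((1 : F) : OnePoint F) = ((-1 : F) : OnePoint F) := by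
  show (if (1:F) = 0 then _ else Option.some ((1:F) + 1⁻¹)) = _
  erw [if_neg one_ne_zero]
  congr 1
  rw [inv_one]
  linear_combination char3 hF

lemma theta_negone : theta F ((-1 : F) : OnePoint F) = ((1 : F) : OnePoint F) := by
  show (if (-1:F) = 0 then _ else Option.some ((-1:F) + (-1:F)⁻¹)) = _
  erw [if_neg (by norm_num)]
  congr 1
  rw [inv_neg, inv_one]
  linear_combination -char3 hF




end Char3

end AuxLemmas

theorem graph_F27 [Fintype F] (hF : Fintype.card F = 27) :
    theta F ∞ = ∞ ∧
    theta F ((1 : F) : OnePoint F) = ((-1 : F) : OnePoint F) ∧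
    theta F ((-1 : F) : OnePoint F) = ((1 : F) : OnePoint F) ∧
    (∀ x : OnePoint F, theta F x = ∞ ↔ x = ((0 : F) : OnePoint F) ∨ x = ∞) ∧
    {α : OnePoint F | ∃ b : F, psi F α = (b : OnePoint F) ∧ orderOf b = 13}.ncard
      = 12 ∧
    (∀ α ∈ {α : OnePoint F | ∃ b : F, psi F α = (b : OnePoint F) ∧ orderOf b = 13},
      Function.minimalPeriod (theta F) α = 12) ∧
    (∀ x : OnePoint F, ∃ k : ℕ, 0 < k ∧
      (theta F)^[k] (theta F x) = theta F x) ∧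
    (∀ α : OnePoint F, (∃ k : ℕ, 0 < k ∧ (theta F)^[k] α = α) →
      α ≠ ((1 : F) : OnePoint F) → α ≠ ((-1 : F) : OnePoint F) →
      {x : OnePoint F | theta F x = α ∧
        ¬ ∃ k : ℕ, 0 < k ∧ (theta F)^[k] x = x}.ncard = 1) ∧
    {C : Set (OnePoint F) | ∃ α : OnePoint F,
        (∃ k : ℕ, 0 < k ∧ (theta F)^[k] α = α) ∧
        C = Set.range (fun i : ℕ => (theta F)^[i] α)}.ncard = 3 := by
  refine ⟨rfl, theta_one hF, theta_negone hF, ?_, ?_, ?_, ?_, ?_, ?_⟩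
  · -- Part 4
    intro x
    match x with
    | Option.none => exact ⟨fun _ => Or.inr rfl, fun _ => rfl⟩
    | Option.some a =>
      by_cases ha : a = 0
      · subst ha
        constructor
        · intro _; exact Or.inl rfl
        · intro _
          show (if (0:F) = 0 then (∞ : OnePoint F) else _) = ∞
          erw [if_pos rfl]
      · constructor
        · intro h
          exfalso
          have h' : (if a = 0 then (∞ : OnePoint F) else Option.some (a + a⁻¹)) = ∞ := h
          erw [if_neg ha] at h'
          exact Option.some_ne_none _ h'
        · rintro (h | h)
          · exact absurd (Option.some_injective F h) ha
          · exact absurd h (Option.some_ne_none a)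
  · -- Part 5
    have himg : {α : OnePoint F | ∃ b : F, psi F α = (b : OnePoint F) ∧ orderOf b = 13}
        = (fun b : F => psi F (Option.some b)) '' {b : F | orderOf b = 13} := by
      ext α
      simp only [Set.mem_setOf_eq, Set.mem_image]
      constructor
      · rintro ⟨b, hpsi, hord⟩
        refine ⟨b, hord, ?_⟩
        have : psi F α = Option.some b := hpsi
        rw [← this, psi_psi hF]
      · rintro ⟨b, hord, rfl⟩
        exact ⟨b, by erw [psi_psi hF]; rfl, hord⟩
    rw [himg, Set.ncard_image_of_injective _
      (fun a b h => Option.some_injective F (psi_inj hF h)), count13 hF]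
  · -- Part 6
    rintro α ⟨b, hpsi, hord⟩
    exact minPeriod12 hF hpsi hord
  · -- Part 7
    exact fun x => ⟨12, by norm_num, theta12 hF x⟩
  · -- Part 8
    rintro α ⟨k, hk, hiter⟩ hne1 hnem1
    -- find b
    obtain ⟨b, hβ, hb0⟩ : ∃ b : F, psi F α = Option.some b ∧ b ≠ 0 := by
      match hψ : psi F α with
      | Option.none =>
        exfalso
        apply hne1
        have : α = psi F (Option.none) := by rw [← hψ, psi_psi hF]
        rw [this]; rfl
      | Option.some b =>
        refine ⟨b, rfl, ?_⟩
        intro h0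
        subst h0
        apply hnem1
        have : α = psi F (Option.some (0:F)) := by rw [← hψ, psi_psi hF]
        rw [this, psi_some (zero_ne_one)]
        have he : ((0:F)+1)/((0:F)-1) = -1 := by norm_num
        rw [he]
        rfl
    have hb13 : b ^ 13 = 1 := by
      have hs : (sMap F)^[k] (Option.some b) = Option.some b := by
        have := (theta_periodic_iff hF k α).mp hiter
        rwa [hβ] at this
      exact period_imp_13 hF hb0 (pow26 hF hb0) hk hs
    have hbinv13 : (b⁻¹) ^ 13 = 1 := by rw [inv_pow, hb13, inv_one]
    set c₀ : F := b⁻¹ ^ 7 with hc₀def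
    have hc₀sq : c₀ ^ 2 = b⁻¹ := by
      rw [hc₀def, ← pow_mul]
      calc b⁻¹ ^ (7 * 2) = b⁻¹ ^ 13 * b⁻¹ := by rw [← pow_succ]
      _ = b⁻¹ := by rw [hbinv13, one_mul]
    have hbinv0 : b⁻¹ ≠ 0 := inv_ne_zero hb0
    have hc₀0 : c₀ ≠ 0 := by
      intro h; rw [h] at hc₀sq; simp at hc₀sq; exact hb0 hc₀sq.symm
    have hdich : c₀ ^ 13 = 1 ∨ c₀ ^ 13 = -1 := by
      have : (c₀ ^ 13) * (c₀ ^ 13) = 1 := by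
        rw [← pow_add, show (13 + 13 : ℕ) = 2 * 13 from rfl, pow_mul, hc₀sq, hbinv13]
      exact mul_self_eq_one_iff.mp this
    set c₁ : F := if c₀ ^ 13 = 1 then -c₀ else c₀ with hc₁def
    have hc₁sq : c₁ ^ 2 = b⁻¹ := by
      rw [hc₁def]; split
      · rw [neg_sq]; exact hc₀sq
      · exact hc₀sq
    have hc₁13 : c₁ ^ 13 = -1 := by
      rw [hc₁def]; split
      · rename_i h
        rw [Odd.neg_pow (by decide), h]
      · rename_i h
        exact hdich.resolve_left h
    have hc₁0 : c₁ ≠ 0 := by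
      intro h
      rw [h] at hc₁sq
      simp at hc₁sq
      exact hb0 hc₁sq.symm
    have hm1 : (-1 : F) ≠ 1 := neg_one_ne_one' hF
    have hneg13 : (-c₁) ^ 13 = 1 := by
      rw [Odd.neg_pow (by decide), hc₁13, neg_neg]
    have hnegc₁0 : -c₁ ≠ 0 := neg_ne_zero.mpr hc₁0
    -- periodicity criterion for points psi (some c)
    have hper_iff : ∀ c : F, c ≠ 0 →
        ((∃ k : ℕ, 0 < k ∧ (theta F)^[k] (psi F (Option.some c)) = psi F (Option.some c))
          ↔ c ^ 13 = 1) := by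
      intro c hc
      constructor
      · rintro ⟨k, hk, hit⟩
        have := (theta_periodic_iff hF k _).mp hit
        erw [psi_psi hF] at this
        exact period_imp_13 hF hc (pow26 hF hc) hk this
      · intro h13
        refine ⟨12, by norm_num, ?_⟩
        erw [theta_periodic_iff hF, psi_psi hF]
        exact sIter12 hF hc h13
    have hTset : {x : OnePoint F | theta F x = α ∧
        ¬ ∃ k : ℕ, 0 < k ∧ (theta F)^[k] x = x} = {psi F (Option.some c₁)} := by
      ext x
      simp only [Set.mem_setOf_eq, Set.mem_singleton_iff]
      constructor
      · rintro ⟨hθ, hnp⟩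
        have hs : sMap F (psi F x) = Option.some b := by
          rw [← conj hF, hθ, hβ]
        obtain ⟨c, hc, hy⟩ : ∃ c : F, c ≠ 0 ∧ psi F x = Option.some c := by
          match hy : psi F x with
          | Option.none =>
            exfalso
            rw [hy, sMap_none] at hs
            exact hb0 (Option.some_injective F hs).symm
          | Option.some c =>
            refine ⟨c, ?_, rfl⟩
            intro h0
            subst h0
            rw [hy, sMap_zero hF] at hs
            exact Option.some_ne_none b hs.symm
          
        rw [hy, sMap_some hF hc] at hs
        have hcsq : c ^ 2 = b⁻¹ := by
          have h1 : c⁻¹ ^ 2 = b := Option.some_injective F hs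
          rw [← h1, ← inv_pow, inv_inv]
        have hcc : c = c₁ ∨ c = -c₁ := by
          have : (c - c₁) * (c + c₁) = 0 := by
            have : c ^ 2 = c₁ ^ 2 := by rw [hcsq, hc₁sq]
            linear_combination this
          rcases mul_eq_zero.mp this with h | h
          · left; exact sub_eq_zero.mp h
          · right; exact eq_neg_of_add_eq_zero_left h
        rcases hcc with rfl | rfl
        · rw [← hy, psi_psi hF]
        · exfalso
          apply hnp
          have hx : x = psi F (Option.some (-c₁)) := by rw [← hy, psi_psi hF]
          rw [hx]
          exact (hper_iff (-c₁) hnegc₁0).mpr hneg13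
      · rintro rfl
        constructor
        · erw [theta_eq hF, psi_psi hF, sMap_some hF hc₁0]
          have : c₁⁻¹ ^ 2 = b := by
            rw [inv_pow, hc₁sq, inv_inv]
          rw [this, ← hβ, psi_psi hF]
        · intro hp
          have := (hper_iff c₁ hc₁0).mp hp
          rw [hc₁13] at this
          exact hm1 this
    rw [hTset, Set.ncard_singleton]
  · -- Part 9
    classical
    obtain ⟨b0, hb0ord, hb0gen⟩ := exists_b0 hF
    have hb00 : b0 ≠ 0 := ne_zero_of_orderOf13 hb0ord
    have hb013 : b0 ^ 13 = 1 := hb0ord ▸ pow_orderOf_eq_one b0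
    set α0 : OnePoint F := psi F (Option.some b0) with hα0def
    set R : OnePoint F → Set (OnePoint F) :=
      fun α => Set.range (fun i : ℕ => (theta F)^[i] α) with hRdef
    -- iterates of α0
    have hC : ∀ i : ℕ, (theta F)^[i] α0 = psi F (Option.some (b0 ^ 24 ^ i)) := by
      intro i
      erw [theta_iter hF, hα0def, psi_psi hF,
        sIter hF hb00 (pow26 hF hb00)]
    have hord24 : ∀ i : ℕ, orderOf (b0 ^ 24 ^ i) = 13 := by
      intro i
      have h13 : (b0 ^ 24 ^ i) ^ 13 = 1 := by
        rw [← pow_mul, mul_comm, pow_mul, hb013, one_pow]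
      have hdvd : orderOf (b0 ^ 24 ^ i) ∣ 13 := orderOf_dvd_of_pow_eq_one h13
      rcases (Nat.Prime.eq_one_or_self_of_dvd (by norm_num) _ hdvd) with h | h
      · exfalso
        have hone : b0 ^ 24 ^ i = 1 := orderOf_eq_one_iff.mp h
        have : (13 : ℕ) ∣ 24 ^ i := by
          have := orderOf_dvd_of_pow_eq_one hone
          rwa [hb0ord] at this
        have h13p : (13 : ℕ).Prime := by norm_num
        have := h13p.dvd_of_dvd_pow this
        norm_num at this
      · exact h
    -- cycle witnesses
    have pB : (theta F)^[2] ((1 : F) : OnePoint F) = ((1 : F) : OnePoint F) := by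
      show theta F (theta F ((1 : F) : OnePoint F)) = ((1 : F) : OnePoint F)
      rw [theta_one hF, theta_negone hF]
    have pC : (theta F)^[12] α0 = α0 := by
      erw [theta_iter hF, hα0def, psi_psi hF]
      congr 1
      exact (period_iff13 hF hb00 hb0ord 12).mpr dvd_rfl
    -- psi of order-13 points is finite
    have hpsi_c_ne : ∀ c : F, orderOf c = 13 →
        psi F (Option.some c) = Option.some ((c+1)/(c-1)) ∧ c ≠ 1 := by
      intro c hc
      have hc1 : c ≠ 1 := by
        intro h; rw [h, orderOf_one] at hc; norm_num at hc
      exact ⟨psi_some hc1, hc1⟩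
    -- the classification of the cycle set
    have hset : {C : Set (OnePoint F) | ∃ α : OnePoint F,
        (∃ k : ℕ, 0 < k ∧ (theta F)^[k] α = α) ∧
        C = Set.range (fun i : ℕ => (theta F)^[i] α)}
        = {R Option.none, R ((1 : F) : OnePoint F), R α0} := by
      ext C
      simp only [Set.mem_setOf_eq, Set.mem_insert_iff, Set.mem_singleton_iff]
      constructor
      · rintro ⟨α, ⟨k, hk, hit⟩, rfl⟩
        have hs : (sMap F)^[k] (psi F α) = psi F α := (theta_periodic_iff hF k α).mp hit
        have hαψ : α = psi F (psi F α) := (psi_psi hF α).symm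
        match hβ : psi F α with
        | Option.none =>
          rw [hβ] at hαψ
          have hα : α = ((1:F) : OnePoint F) := hαψ
          exact Or.inr (Or.inl (congrArg R hα))
        | Option.some b =>
          by_cases hb0 : b = 0
          · subst hb0
            rw [hβ] at hαψ
            have hα : α = ((-1 : F) : OnePoint F) := by
              rw [hαψ, psi_some (zero_ne_one)]
              have he : ((0:F)+1)/((0:F)-1) = -1 := by norm_num
              rw [he]; rfl
            have h11 : (theta F)^[1] ((theta F)^[1] (((1:F)) : OnePoint F))
                = ((1:F) : OnePoint F) := by
              show theta F (theta F (((1:F)) : OnePoint F)) = _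
              rw [theta_one hF, theta_negone hF]
            have hsh := range_shift (theta F) 1 1 (((1:F)) : OnePoint F) h11
            simp only [Function.iterate_one] at hsh
            rw [theta_one hF] at hsh
            have : R ((-1:F) : OnePoint F) = R ((1:F) : OnePoint F) := hsh
            exact Or.inr (Or.inl ((congrArg R hα).trans this))
          · rw [hβ] at hs
            have hb13 : b ^ 13 = 1 := period_imp_13 hF hb0 (pow26 hF hb0) hk hs
            by_cases hb1 : b = 1
            · subst hb1
              rw [hβ] at hαψ
              have hα : α = Option.none := by
                rw [hαψ]
                show (if (1:F) = 1 then (∞ : OnePoint F) else _) = _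
                erw [if_pos rfl]; rfl
              exact Or.inl (congrArg R hα)
            · -- the 12-cycle case
              have hbord : orderOf b = 13 := by
                have hdvd : orderOf b ∣ 13 := orderOf_dvd_of_pow_eq_one hb13
                rcases (Nat.Prime.eq_one_or_self_of_dvd (by norm_num) _ hdvd) with h | h
                · exact absurd (orderOf_eq_one_iff.mp h) hb1
                · exact h
              obtain ⟨m, hm⟩ := hb0gen b hb0 hb13
              have hmm : b = b0 ^ (m % 13) := by
                rw [hm, pow_eq_pow_mod m hb013]
              have hm0 : m % 13 ≠ 0 := by
                intro h
                rw [h, pow_zero] at hmm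
                exact hb1 hmm
              obtain ⟨j, hj12, hjm⟩ := exists_j (m % 13) (Nat.mod_lt _ (by norm_num)) hm0
              have hαj : (theta F)^[j] α0 = α := by
                rw [hC j, hαψ, hβ]
                congr 2
                calc b0 ^ 24 ^ j = b0 ^ (24 ^ j % 13) := pow_eq_pow_mod _ hb013
                  _ = b0 ^ (11 ^ j % 13) := by
                      congr 1
                      have h2411 : (24 : ℕ) ≡ 11 [MOD 13] := by decide
                      exact (Nat.ModEq.pow j h2411)
                  _ = b0 ^ (m % 13) := by rw [hjm]
                  _ = b := hmm.symm
              have hcyc : (theta F)^[12 - j] ((theta F)^[j] α0) = α0 := by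
                rw [← Function.iterate_add_apply, show 12 - j + j = 12 by omega, pC]
              have hsh := range_shift (theta F) j (12 - j) α0 hcyc
              rw [hαj] at hsh
              exact Or.inr (Or.inr hsh)
      · rintro (rfl | rfl | rfl)
        · exact ⟨Option.none, ⟨1, one_pos, rfl⟩, rfl⟩
        · exact ⟨((1:F) : OnePoint F), ⟨2, by norm_num, pB⟩, rfl⟩
        · exact ⟨α0, ⟨12, by norm_num, pC⟩, rfl⟩
    rw [hset]
    -- distinctness
    have hmemA : Option.none ∈ R Option.none := ⟨0, rfl⟩
    have hmemB1 : ((1:F) : OnePoint F) ∈ R ((1:F) : OnePoint F) := ⟨0, rfl⟩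
    have hBvals : ∀ i : ℕ, (theta F)^[i] (((1:F)) : OnePoint F) = ((1:F) : OnePoint F)
        ∨ (theta F)^[i] (((1:F)) : OnePoint F) = ((-1:F) : OnePoint F) := by
      intro i
      induction i with
      | zero => exact Or.inl rfl
      | succ n ih =>
        rw [Function.iterate_succ_apply']
        rcases ih with h | h
        · rw [h, theta_one hF]; exact Or.inr rfl
        · rw [h, theta_negone hF]; exact Or.inl rfl
    have hnotinfB : (Option.none : OnePoint F) ∉ R ((1:F) : OnePoint F) := by
      rintro ⟨i, hi⟩
      have hi' : (theta F)^[i] ((1:F) : OnePoint F) = Option.none := hi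
      rcases hBvals i with h | h <;> rw [hi'] at h <;> exact Option.some_ne_none _ h.symm
    have hCforms : ∀ z ∈ R α0, ∃ c : F, orderOf c = 13 ∧ c ≠ 1
        ∧ z = Option.some ((c+1)/(c-1)) := by
      rintro z ⟨i, hi⟩
      have hi' : (theta F)^[i] α0 = z := hi
      refine ⟨b0 ^ 24 ^ i, hord24 i, ?_, ?_⟩
      · intro h
        have := hord24 i
        rw [h, orderOf_one] at this
        norm_num at this
      · obtain ⟨hps, hne⟩ := hpsi_c_ne _ (hord24 i)
        rw [← hi', hC i, hps]
    have hnotinfC : (Option.none : OnePoint F) ∉ R α0 := by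
      intro h
      obtain ⟨c, _, _, hz⟩ := hCforms _ h
      exact Option.some_ne_none _ hz.symm
    have hnotoneC : (((1:F)) : OnePoint F) ∉ R α0 := by
      intro h
      obtain ⟨c, hcord, hc1, hz⟩ := hCforms _ h
      have : (1 : F) = (c+1)/(c-1) := Option.some_injective F hz
      have hcm : c - 1 ≠ 0 := sub_ne_zero.mpr hc1
      rw [eq_div_iff hcm, one_mul] at this
      exact htwo hF (by linear_combination -this)
    have hAB : R Option.none ≠ R ((1:F) : OnePoint F) := by
      intro h; rw [h] at hmemA; exact hnotinfB hmemA
    have hAC : R Option.none ≠ R α0 := by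
      intro h; rw [h] at hmemA; exact hnotinfC hmemA
    have hBC : R ((1:F) : OnePoint F) ≠ R α0 := by
      intro h; rw [h] at hmemB1; exact hnotoneC hmemB1
    exact Set.ncard_eq_three.mpr
      ⟨R Option.none, R ((1:F) : OnePoint F), R α0, hAB, hAC, hBC, rfl⟩
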